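/- arXiv:2309.03853 — 2 statements merged into one kernel-verified Lean document; each statement's English description precedes it below -/
import Mathlib

section
/- For a symmetric positive definite n×n matrix A (n ≥ 2): the anisotropic Gaussian perimeter P_{γ_A} assigns equal values to any two half-spaces of equal γ_A measure if and only if A = aI_n for some constant a > 0. -/
open MeasureTheory Metric Filter Set Matrix
open scoped ENNReal Topology RealInnerProductSpace Pointwise

noncomputable section

set_option maxHeartbeats 2000000

def matVec {n : ℕ} (M : Matrix (Fin n) (Fin n) ℝ) (x : EuclideanSpace ℝ (Fin n)) :
    EuclideanSpace ℝ (Fin n) :=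
  (EuclideanSpace.equiv (Fin n) ℝ).symm (M.mulVec (EuclideanSpace.equiv (Fin n) ℝ x))

def opNorm {n : ℕ} (M : Matrix (Fin n) (Fin n) ℝ) : ℝ :=
  ‖Matrix.toEuclideanCLM (𝕜 := ℝ) M‖

def gaussDensity {n : ℕ} (A : Matrix (Fin n) (Fin n) ℝ) (x : EuclideanSpace ℝ (Fin n)) : ℝ :=
  Real.exp (- (inner ℝ (matVec A x) x : ℝ) / 2)

def gaussMass {n : ℕ} (A : Matrix (Fin n) (Fin n) ℝ) (E : Set (EuclideanSpace ℝ (Fin n))) : ℝ :=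
  (Real.sqrt A.det / (2 * Real.pi) ^ ((n : ℝ) / 2)) * ∫ x in E, gaussDensity A x

def essBoundary {n : ℕ} (E : Set (EuclideanSpace ℝ (Fin n))) : Set (EuclideanSpace ℝ (Fin n)) :=
  {x | ¬ Tendsto (fun r : ℝ => volume (E ∩ ball x r) / volume (ball x r)) (𝓝[>] 0) (𝓝 0) ∧
       ¬ Tendsto (fun r : ℝ => volume (E ∩ ball x r) / volume (ball x r)) (𝓝[>] 0) (𝓝 1)}

def gaussPerimIn {n : ℕ} (A : Matrix (Fin n) (Fin n) ℝ)
    (E F : Set (EuclideanSpace ℝ (Fin n))) : ℝ :=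
  (Real.sqrt A.det / (2 * Real.pi) ^ (((n : ℝ) - 1) / 2)) *
    ∫ x in essBoundary E ∩ F, gaussDensity A x ∂(μH[(n : ℝ) - 1])

def gaussPerim {n : ℕ} (A : Matrix (Fin n) (Fin n) ℝ)
    (E : Set (EuclideanSpace ℝ (Fin n))) : ℝ :=
  gaussPerimIn A E Set.univ

def halfSpace {n : ℕ} (ω : EuclideanSpace ℝ (Fin n)) (t : ℝ) :
    Set (EuclideanSpace ℝ (Fin n)) :=
  {x | (inner ℝ x ω : ℝ) < t}

def gaussCDF (x : ℝ) : ℝ :=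
  (Real.sqrt (2 * Real.pi))⁻¹ * ∫ t in Set.Iio x, Real.exp (- t ^ 2 / 2)

def gaussBary {n : ℕ} (A : Matrix (Fin n) (Fin n) ℝ)
    (E : Set (EuclideanSpace ℝ (Fin n))) : EuclideanSpace ℝ (Fin n) :=
  (Real.sqrt A.det / (2 * Real.pi) ^ ((n : ℝ) / 2)) • ∫ x in E, gaussDensity A x • x


/-! ### Auxiliary lemmas -/

section Aux

set_option maxHeartbeats 1000000

lemma exp_sum_aux {k : ℕ} (c : Fin k → ℝ) (z : Fin k → ℝ) :
    (∏ j, Real.exp (-(c j / 2) * z j ^ 2)) = Real.exp (-(∑ j, c j * z j ^ 2) / 2) := by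
  rw [← Real.exp_sum]
  congr 1
  rw [neg_div, Finset.sum_div, ← Finset.sum_neg_distrib]
  exact Finset.sum_congr rfl fun j _ => by ring

lemma gauss_integrable {k : ℕ} (c : Fin k → ℝ) (hc : ∀ j, 0 < c j) :
    Integrable (fun z : EuclideanSpace ℝ (Fin k) => Real.exp (-(∑ j, c j * z j ^ 2) / 2)) := by
  have hmp := (EuclideanSpace.volume_preserving_symm_measurableEquiv_toLp (Fin k)).symm
  have h1 : Integrable (fun z : Fin k → ℝ => ∏ j, Real.exp (-(c j / 2) * z j ^ 2)) :=
    Integrable.fintype_prod (f := fun j (t : ℝ) => Real.exp (-(c j / 2) * t ^ 2))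
      (fun j => integrable_exp_neg_mul_sq (div_pos (hc j) two_pos))
  simp_rw [exp_sum_aux c] at h1
  exact (hmp.integrable_comp_emb (MeasurableEquiv.measurableEmbedding _)).mp h1

lemma gauss_integral {k : ℕ} (c : Fin k → ℝ) :
    ∫ z : EuclideanSpace ℝ (Fin k), Real.exp (-(∑ j, c j * z j ^ 2) / 2) =
      ∏ j, Real.sqrt (2 * Real.pi / c j) := by
  have hmp := (EuclideanSpace.volume_preserving_symm_measurableEquiv_toLp (Fin k)).symm
  rw [← hmp.integral_comp (MeasurableEquiv.measurableEmbedding _)]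
  calc ∫ z : Fin k → ℝ, Real.exp (-(∑ j, c j * (MeasurableEquiv.toLp 2 (Fin k → ℝ) z) j ^ 2) / 2)
      = ∫ z : Fin k → ℝ, ∏ j, Real.exp (-(c j / 2) * z j ^ 2) := by
        congr 1; funext z; exact (exp_sum_aux c z).symm
    _ = ∏ j, ∫ t : ℝ, Real.exp (-(c j / 2) * t ^ 2) :=
        integral_fintype_prod_eq_prod (f := fun j (t : ℝ) => Real.exp (-(c j / 2) * t ^ 2))
    _ = ∏ j, Real.sqrt (2 * Real.pi / c j) := by
        refine Finset.prod_congr rfl fun j _ => ?_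
        rw [integral_gaussian (c j / 2)]
        congr 1
        rw [div_div_eq_mul_div, mul_comm]

def matVecL {n : ℕ} (A : Matrix (Fin n) (Fin n) ℝ) :
    EuclideanSpace ℝ (Fin n) →ₗ[ℝ] EuclideanSpace ℝ (Fin n) where
  toFun := matVec A
  map_add' x y := by
    show (EuclideanSpace.equiv (Fin n) ℝ).symm _ = _
    rw [map_add, Matrix.mulVec_add, map_add]; rfl
  map_smul' c x := by
    show (EuclideanSpace.equiv (Fin n) ℝ).symm _ = _
    rw [_root_.map_smul, Matrix.mulVec_smul, _root_.map_smul]; rfl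

lemma matVecL_apply {n : ℕ} (A : Matrix (Fin n) (Fin n) ℝ) (x) : matVecL A x = matVec A x := rfl

variable {n : ℕ} (A : Matrix (Fin n) (Fin n) ℝ)

lemma matVec_eigen (hA : A.PosDef) (j : Fin n) :
    matVec A (hA.1.eigenvectorBasis j) = hA.1.eigenvalues j • hA.1.eigenvectorBasis j := by
  have := hA.1.mulVec_eigenvectorBasis j
  show WithLp.toLp 2 (A *ᵥ (hA.1.eigenvectorBasis j).ofLp) = _
  rw [this]; rfl

lemma quadform_diag (hA : A.PosDef) (y : EuclideanSpace ℝ (Fin n)) :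
    (inner ℝ (matVec A (hA.1.eigenvectorBasis.repr.symm y)) (hA.1.eigenvectorBasis.repr.symm y) : ℝ)
      = ∑ j, hA.1.eigenvalues j * y j ^ 2 := by
  set B := hA.1.eigenvectorBasis with hB
  have h1 : matVec A (B.repr.symm y) = B.repr.symm (WithLp.toLp 2 (fun j => hA.1.eigenvalues j * y j)) := by
    rw [← B.sum_repr_symm, ← B.sum_repr_symm, ← matVecL_apply, map_sum]
    refine Finset.sum_congr rfl fun j _ => ?_
    rw [_root_.map_smul, matVecL_apply, matVec_eigen A hA j, smul_smul, mul_comm, ← smul_smul]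
  rw [h1, B.repr.symm.inner_map_map, PiLp.inner_apply]
  exact Finset.sum_congr rfl fun j _ => by simp [RCLike.inner_apply]; ring

lemma gaussDensity_diag (hA : A.PosDef) (y : EuclideanSpace ℝ (Fin n)) :
    gaussDensity A (hA.1.eigenvectorBasis.repr.symm y)
      = Real.exp (-(∑ j, hA.1.eigenvalues j * y j ^ 2) / 2) := by
  rw [gaussDensity, quadform_diag A hA y]

lemma hausdorff_eq_smul_volume (k : ℕ) :
    ∃ c : ℝ≥0∞, 0 < c ∧ c < ⊤ ∧
      (μH[(k : ℝ)] : Measure (EuclideanSpace ℝ (Fin k))) = c • volume := by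
  have hfr : (Module.finrank ℝ (EuclideanSpace ℝ (Fin k))) = k := finrank_euclideanSpace_fin
  have hHaar : Measure.IsAddHaarMeasure (μH[(k : ℝ)] : Measure (EuclideanSpace ℝ (Fin k))) := by
    have := MeasureTheory.isAddHaarMeasure_hausdorffMeasure
      (E := EuclideanSpace ℝ (Fin k))
    rwa [hfr] at this
  have h := Measure.isAddLeftInvariant_eq_smul
    (μH[(k : ℝ)] : Measure (EuclideanSpace ℝ (Fin k))) (volume : Measure (EuclideanSpace ℝ (Fin k)))
  refine ⟨Measure.addHaarScalarFactor (μH[(k : ℝ)] : Measure (EuclideanSpace ℝ (Fin k))) volume,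
    ?_, ?_, ?_⟩
  · exact_mod_cast Measure.addHaarScalarFactor_pos_of_isAddHaarMeasure _ _
  · exact ENNReal.coe_lt_top
  · exact_mod_cast h

lemma setIntegral_range_isometry {k m : ℕ} (ψ : EuclideanSpace ℝ (Fin k) → EuclideanSpace ℝ (Fin m))
    (hψ : Isometry ψ) (d : ℝ) (hd : 0 ≤ d) (f : EuclideanSpace ℝ (Fin m) → ℝ) :
    ∫ x in Set.range ψ, f x ∂(μH[d] : Measure (EuclideanSpace ℝ (Fin m)))
      = ∫ z, f (ψ z) ∂(μH[d] : Measure (EuclideanSpace ℝ (Fin k))) := by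
  have hemb : MeasurableEmbedding ψ := hψ.isClosedEmbedding.measurableEmbedding
  have hmap : Measure.map ψ (μH[d] : Measure (EuclideanSpace ℝ (Fin k)))
      = (μH[d] : Measure (EuclideanSpace ℝ (Fin m))).restrict (Set.range ψ) := by
    refine Measure.ext fun s hs => ?_
    rw [hemb.map_apply, Measure.restrict_apply hs]
    have : ψ '' (ψ ⁻¹' s) = s ∩ Set.range ψ := Set.image_preimage_eq_inter_range
    rw [← this, hψ.hausdorffMeasure_image (Or.inl hd)]
  show ∫ x, f x ∂((μH[d] : Measure (EuclideanSpace ℝ (Fin m))).restrict (Set.range ψ)) = _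
  rw [← hmap]
  exact hemb.integral_map f

lemma coord_dist (x y : EuclideanSpace ℝ (Fin n)) (i : Fin n) : |x i - y i| ≤ dist x y := by
  rw [EuclideanSpace.dist_eq]
  have h1 : |x i - y i| = Real.sqrt ((x i - y i) ^ 2) := (Real.sqrt_sq_eq_abs _).symm
  rw [h1]
  apply Real.sqrt_le_sqrt
  have h2 := Finset.single_le_sum (f := fun j => (x j - y j) ^ 2)
    (fun j _ => sq_nonneg _) (Finset.mem_univ i)
  simpa [Real.dist_eq, sq_abs] using h2

lemma image_measure_eq (U : EuclideanSpace ℝ (Fin n) ≃ₗᵢ[ℝ] EuclideanSpace ℝ (Fin n))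
    {s : Set (EuclideanSpace ℝ (Fin n))} (hs : MeasurableSet s) :
    volume (U '' s) = volume s := by
  have h1 : U '' s = U.symm ⁻¹' s := by
    ext y; simp [LinearIsometryEquiv.image_eq_preimage_symm]
  rw [h1]
  exact U.symm.measurePreserving.measure_preimage hs.nullMeasurableSet

lemma essBoundary_image (U : EuclideanSpace ℝ (Fin n) ≃ₗᵢ[ℝ] EuclideanSpace ℝ (Fin n))
    {Q : Set (EuclideanSpace ℝ (Fin n))} (hQ : MeasurableSet Q) :
    essBoundary (U '' Q) = U '' essBoundary Q := by
  have key : ∀ (x : EuclideanSpace ℝ (Fin n)) (r : ℝ),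
      volume ((U '' Q) ∩ ball (U x) r) = volume (Q ∩ ball x r) := by
    intro x r
    have h1 : ball (U x) r = U '' ball x r := by
      have h := U.toIsometryEquiv.image_ball x r
      rw [LinearIsometryEquiv.coe_toIsometryEquiv] at h
      exact h.symm
    rw [h1, ← Set.image_inter U.injective]
    exact image_measure_eq U (hQ.inter measurableSet_ball)
  have keyb : ∀ (x : EuclideanSpace ℝ (Fin n)) (r : ℝ),
      volume (ball (U x) r) = volume (ball x r) := by
    intro x r
    have h := U.toIsometryEquiv.image_ball x r
    rw [LinearIsometryEquiv.coe_toIsometryEquiv] at h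
    rw [show ball (U x) r = U '' ball x r from h.symm]
    exact image_measure_eq U measurableSet_ball
  have hfun : ∀ x : EuclideanSpace ℝ (Fin n),
      (fun r : ℝ => volume ((U '' Q) ∩ ball (U x) r) / volume (ball (U x) r))
        = fun r : ℝ => volume (Q ∩ ball x r) / volume (ball x r) := by
    intro x; funext r; rw [key x r, keyb x r]
  ext y
  obtain ⟨x, rfl⟩ := U.surjective y
  simp only [essBoundary, Set.mem_setOf_eq, hfun x]
  constructor
  · intro h; exact ⟨x, h, rfl⟩
  · rintro ⟨x', hx', hEq⟩
    obtain rfl : x' = x := U.injective hEq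
    exact hx'

lemma essBoundary_coord_halfspace (i : Fin n) :
    essBoundary {x : EuclideanSpace ℝ (Fin n) | x i < 0}
      = {x : EuclideanSpace ℝ (Fin n) | x i = 0} := by
  set E : Set (EuclideanSpace ℝ (Fin n)) := {x | x i < 0} with hE
  ext x
  rcases lt_trichotomy (x i) 0 with hx | hx | hx
  · -- ratio is eventually 1
    have hT : Tendsto (fun r : ℝ => volume (E ∩ ball x r) / volume (ball x r)) (𝓝[>] 0) (𝓝 1) := by
      have hev : ∀ᶠ r in 𝓝[>] (0:ℝ),
          volume (E ∩ ball x r) / volume (ball x r) = 1 := by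
        filter_upwards [Ioo_mem_nhdsGT_of_mem (by constructor <;> [exact le_refl 0; linarith] :
          (0:ℝ) ∈ Ico 0 (-x i))] with r hr
        have hsub : ball x r ⊆ E := by
          intro y hy
          have h2 : |x i - y i| ≤ dist x y := coord_dist x y i
          have h3 : dist x y < r := by rwa [dist_comm, ← mem_ball]
          have : y i < 0 := by
            have := abs_sub_le_iff.mp (le_of_lt (lt_of_le_of_lt h2 h3)) |>.2
            linarith [hr.2]
          exact this
        rw [Set.inter_eq_right.mpr hsub]
        exact ENNReal.div_self (measure_ball_pos volume x hr.1).ne' measure_ball_lt_top.ne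
      exact Filter.Tendsto.congr' (Filter.EventuallyEq.symm hev) tendsto_const_nhds
    simp only [essBoundary, Set.mem_setOf_eq]
    constructor
    · rintro ⟨-, h1⟩; exact absurd hT h1
    · intro h; exact absurd h (by linarith)
  · -- boundary point : ratio is 1/2
    have key : ∀ r : ℝ, 0 < r →
        volume (E ∩ ball x r) / volume (ball x r) = 2⁻¹ := by
      intro r hr
      set b := ball x r with hb
      set σ : EuclideanSpace ℝ (Fin n) ≃ₗᵢ[ℝ] EuclideanSpace ℝ (Fin n) :=
        LinearIsometryEquiv.piLpCongrRight 2
          (fun j => if j = i then LinearIsometryEquiv.neg ℝ else LinearIsometryEquiv.refl ℝ ℝ)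
      have hσ_apply : ∀ (y : EuclideanSpace ℝ (Fin n)), σ y i = - y i := by
        intro y
        simp [σ, LinearIsometryEquiv.piLpCongrRight_apply]
      have hσx : σ x = x := by
        refine PiLp.ext fun j => ?_
        by_cases hj : j = i
        · subst hj; rw [hσ_apply x, hx, neg_zero]
        · simp [σ, LinearIsometryEquiv.piLpCongrRight_apply, hj]
      have hσ_ball : σ ⁻¹' b = b := by
        have hsx : σ.symm x = x := by
          conv_lhs => rw [← hσx]
          rw [LinearIsometryEquiv.symm_apply_apply]
        have h1 := σ.toIsometryEquiv.preimage_ball x r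
        rw [LinearIsometryEquiv.coe_toIsometryEquiv, ← LinearIsometryEquiv.toIsometryEquiv_symm,
          LinearIsometryEquiv.coe_toIsometryEquiv, hsx] at h1
        exact h1
      have hσE : σ ⁻¹' E = {y : EuclideanSpace ℝ (Fin n) | 0 < y i} := by
        ext y; simp only [Set.mem_preimage, hE, Set.mem_setOf_eq, hσ_apply y]; constructor <;> intro <;> linarith
      have hmeasE : MeasurableSet E := by
        have : Continuous fun y : EuclideanSpace ℝ (Fin n) => y i :=
          (continuous_apply i).comp (PiLp.continuous_ofLp 2 _)
        exact measurableSet_lt this.measurable measurable_const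
      have hmeasP : MeasurableSet {y : EuclideanSpace ℝ (Fin n) | 0 < y i} := by
        have : Continuous fun y : EuclideanSpace ℝ (Fin n) => y i :=
          (continuous_apply i).comp (PiLp.continuous_ofLp 2 _)
        exact measurableSet_lt measurable_const this.measurable
      have hmb : MeasurableSet b := by rw [hb]; exact measurableSet_ball
      have hPb : volume ({y : EuclideanSpace ℝ (Fin n) | 0 < y i} ∩ b) = volume (E ∩ b) := by
        have h := σ.measurePreserving.measure_preimage (s := E ∩ b)
          ((hmeasE.inter hmb).nullMeasurableSet)
        rw [Set.preimage_inter, hσ_ball, hσE] at h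
        exact h
      have hmid : volume {y : EuclideanSpace ℝ (Fin n) | y i = 0} = 0 := by
        set K : Submodule ℝ (EuclideanSpace ℝ (Fin n)) :=
          LinearMap.ker ((innerSL ℝ (EuclideanSpace.single i (1:ℝ))) :
            EuclideanSpace ℝ (Fin n) →L[ℝ] ℝ).toLinearMap with hK
        have hset : {y : EuclideanSpace ℝ (Fin n) | y i = 0} = (K : Set (EuclideanSpace ℝ (Fin n))) := by
          ext y
          simp only [hK, SetLike.mem_coe, LinearMap.mem_ker, Set.mem_setOf_eq,
            ContinuousLinearMap.coe_coe, innerSL_apply_apply, EuclideanSpace.inner_single_left]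
          norm_num
        have hne : K ≠ ⊤ := by
          intro h
          have h1 : EuclideanSpace.single i (1:ℝ) ∈ K := h ▸ Submodule.mem_top
          simp only [hK, LinearMap.mem_ker, ContinuousLinearMap.coe_coe, innerSL_apply_apply,
            EuclideanSpace.inner_single_left, EuclideanSpace.single_apply] at h1
          norm_num at h1
        rw [hset]
        exact Measure.addHaar_submodule volume K hne
      -- decomposition
      set a := volume (E ∩ b)
      have hcover : volume b = a + a := by
        have hdisj : Disjoint (E ∩ b) ({y : EuclideanSpace ℝ (Fin n) | 0 < y i} ∩ b) := by
          refine Set.disjoint_left.mpr ?_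
          rintro y ⟨hy1, -⟩ ⟨hy2, -⟩
          simp only [hE, Set.mem_setOf_eq] at hy1
          exact absurd hy2 (by simp only [Set.mem_setOf_eq]; linarith)
        have hunion : volume ((E ∩ b) ∪ ({y : EuclideanSpace ℝ (Fin n) | 0 < y i} ∩ b))
            = a + a := by
          rw [measure_union hdisj (hmeasP.inter measurableSet_ball), hPb]
        have hle : volume b ≤ a + a := by
          calc volume b ≤ volume (((E ∩ b) ∪ ({y : EuclideanSpace ℝ (Fin n) | 0 < y i} ∩ b))
              ∪ ({y : EuclideanSpace ℝ (Fin n) | y i = 0} ∩ b)) := by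
                refine measure_mono fun y hy => ?_
                rcases lt_trichotomy (y i) 0 with h | h | h
                · exact Or.inl (Or.inl ⟨h, hy⟩)
                · exact Or.inr ⟨h, hy⟩
                · exact Or.inl (Or.inr ⟨h, hy⟩)
            _ ≤ volume ((E ∩ b) ∪ ({y : EuclideanSpace ℝ (Fin n) | 0 < y i} ∩ b))
                + volume ({y : EuclideanSpace ℝ (Fin n) | y i = 0} ∩ b) := measure_union_le _ _
            _ ≤ a + a + 0 := by
                refine add_le_add hunion.le ?_
                rw [← hmid]
                exact measure_mono Set.inter_subset_left
            _ = a + a := by rw [add_zero]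
        have hge : a + a ≤ volume b := by
          rw [← hunion]
          exact measure_mono (Set.union_subset Set.inter_subset_right Set.inter_subset_right)
        exact le_antisymm hle hge
      have ha0 : a ≠ 0 := by
        intro h
        have : volume b = 0 := by rw [hcover, h, add_zero]
        exact (measure_ball_pos volume x hr).ne' this
      have hat : a ≠ ⊤ := by
        intro h
        have : volume b = ⊤ := by rw [hcover, h]; simp
        exact measure_ball_lt_top.ne this
      rw [hcover, ← two_mul, div_eq_mul_inv,
        ENNReal.mul_inv (Or.inr hat) (Or.inr ha0), mul_comm (2⁻¹ : ℝ≥0∞) a⁻¹,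
        ← mul_assoc, ENNReal.mul_inv_cancel ha0 hat, one_mul]
    have hev : ∀ᶠ r in 𝓝[>] (0:ℝ),
        volume (E ∩ ball x r) / volume (ball x r) = 2⁻¹ := by
      filter_upwards [self_mem_nhdsWithin] with r hr using key r hr
    have hT : Tendsto (fun r : ℝ => volume (E ∩ ball x r) / volume (ball x r)) (𝓝[>] 0)
        (𝓝 2⁻¹) := Filter.Tendsto.congr' (Filter.EventuallyEq.symm hev) tendsto_const_nhds
    simp only [essBoundary, Set.mem_setOf_eq]
    constructor
    · intro _; exact hx
    · intro _
      refine ⟨fun h => ?_, fun h => ?_⟩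
      · have := tendsto_nhds_unique hT h
        simp [ENNReal.inv_eq_zero] at this
      · have := tendsto_nhds_unique hT h
        rw [ENNReal.inv_eq_one] at this
        norm_num at this
  · -- ratio is eventually 0
    have hT : Tendsto (fun r : ℝ => volume (E ∩ ball x r) / volume (ball x r)) (𝓝[>] 0) (𝓝 0) := by
      have hev : ∀ᶠ r in 𝓝[>] (0:ℝ),
          volume (E ∩ ball x r) / volume (ball x r) = 0 := by
        filter_upwards [Ioo_mem_nhdsGT_of_mem (by constructor <;> [exact le_refl 0; linarith] :
          (0:ℝ) ∈ Ico 0 (x i))] with r hr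
        have hsub : E ∩ ball x r = ∅ := by
          rw [Set.eq_empty_iff_forall_notMem]
          rintro y ⟨hy1, hy2⟩
          have h2 : |x i - y i| ≤ dist x y := coord_dist x y i
          have h3 : dist x y < r := by rwa [dist_comm, ← mem_ball]
          have := abs_sub_le_iff.mp (le_of_lt (lt_of_le_of_lt h2 h3)) |>.1
          simp only [hE, Set.mem_setOf_eq] at hy1
          linarith [hr.2]
        rw [hsub]
        simp
      exact Filter.Tendsto.congr' (Filter.EventuallyEq.symm hev) tendsto_const_nhds
    simp only [essBoundary, Set.mem_setOf_eq]
    constructor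
    · rintro ⟨h0, -⟩; exact absurd hT h0
    · intro h; exact absurd h (by linarith)

def embedAt {k : ℕ} (i : Fin (k + 1)) (z : EuclideanSpace ℝ (Fin k)) :
    EuclideanSpace ℝ (Fin (k + 1)) := WithLp.toLp 2 (i.insertNth (0 : ℝ) (WithLp.ofLp z))

lemma embedAt_isometry {k : ℕ} (i : Fin (k + 1)) : Isometry (embedAt i) := by
  refine Isometry.of_dist_eq fun z w => ?_
  rw [EuclideanSpace.dist_eq, EuclideanSpace.dist_eq]
  congr 1
  rw [Fin.sum_univ_succAbove (fun j => dist (embedAt i z j) (embedAt i w j) ^ 2) i]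
  simp [embedAt, Fin.insertNth_apply_same, Fin.insertNth_apply_succAbove]

lemma embedAt_range {k : ℕ} (i : Fin (k + 1)) :
    Set.range (embedAt i) = {x : EuclideanSpace ℝ (Fin (k + 1)) | x i = 0} := by
  ext x
  constructor
  · rintro ⟨z, rfl⟩
    simp [embedAt, Fin.insertNth_apply_same]
  · intro hx
    refine ⟨WithLp.toLp 2 (fun m => x (i.succAbove m)), ?_⟩
    ext j
    by_cases h : j = i
    · subst h; simp [embedAt, Fin.insertNth_apply_same, hx.symm]
    · obtain ⟨m, rfl⟩ := Fin.exists_succAbove_eq h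
      simp [embedAt, Fin.insertNth_apply_succAbove]

lemma embedAt_sum {k : ℕ} (i : Fin (k + 1)) (lam : Fin (k + 1) → ℝ)
    (z : EuclideanSpace ℝ (Fin k)) :
    ∑ j, lam j * (embedAt i z j) ^ 2 = ∑ m, lam (i.succAbove m) * (z m) ^ 2 := by
  rw [Fin.sum_univ_succAbove (fun j => lam j * (embedAt i z j) ^ 2) i]
  simp [embedAt, Fin.insertNth_apply_same, Fin.insertNth_apply_succAbove]

lemma gaussDensity_continuous : Continuous (gaussDensity A) := by
  have h1 : Continuous (matVec A) := by
    have := LinearMap.continuous_of_finiteDimensional (matVecL A)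
    exact this
  exact (Real.continuous_exp.comp (((h1.inner continuous_id).neg).div_const 2))

lemma gaussDensity_pos (x) : 0 < gaussDensity A x := Real.exp_pos _

lemma isOpen_halfSpace (ω : EuclideanSpace ℝ (Fin n)) (t : ℝ) : IsOpen (halfSpace ω t) :=
  isOpen_lt (continuous_id.inner continuous_const) continuous_const

lemma measurableSet_halfSpace (ω : EuclideanSpace ℝ (Fin n)) (t : ℝ) :
    MeasurableSet (halfSpace ω t) := (isOpen_halfSpace ω t).measurableSet

lemma gaussDensity_neg (x) : gaussDensity A (-x) = gaussDensity A x := by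
  unfold gaussDensity
  rw [show matVec A (-x) = - matVec A x from by
    rw [← matVecL_apply, ← matVecL_apply, map_neg], inner_neg_neg]

lemma hyperplane_null (ω : EuclideanSpace ℝ (Fin n)) (hω : ω ≠ 0) :
    volume {x : EuclideanSpace ℝ (Fin n) | (inner ℝ x ω : ℝ) = 0} = 0 := by
  set K : Submodule ℝ (EuclideanSpace ℝ (Fin n)) :=
    LinearMap.ker ((innerSL ℝ ω : EuclideanSpace ℝ (Fin n) →L[ℝ] ℝ) :
      EuclideanSpace ℝ (Fin n) →ₗ[ℝ] ℝ) with hK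
  have hset : {x : EuclideanSpace ℝ (Fin n) | (inner ℝ x ω : ℝ) = 0}
      = (K : Set (EuclideanSpace ℝ (Fin n))) := by
    ext x
    simp only [hK, SetLike.mem_coe, LinearMap.mem_ker, Set.mem_setOf_eq,
      ContinuousLinearMap.coe_coe, innerSL_apply_apply]
    rw [real_inner_comm]
  have hne : K ≠ ⊤ := by
    intro h
    have h1 : ω ∈ K := h ▸ Submodule.mem_top
    simp only [hK, LinearMap.mem_ker, ContinuousLinearMap.coe_coe, innerSL_apply_apply] at h1
    exact hω ((inner_self_eq_zero (𝕜 := ℝ)).mp h1)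
  rw [hset]
  exact Measure.addHaar_submodule volume K hne

/-- half-mass lemma -/

lemma setIntegral_halfSpace_zero (hInt : Integrable (gaussDensity A))
    (ω : EuclideanSpace ℝ (Fin n)) (hω : ω ≠ 0) :
    2 * ∫ x in halfSpace ω 0, gaussDensity A x = ∫ x, gaussDensity A x := by
  set P : Set (EuclideanSpace ℝ (Fin n)) := {x | 0 < (inner ℝ x ω : ℝ)} with hP
  have hmeasP : MeasurableSet P :=
    (isOpen_lt continuous_const (continuous_id.inner continuous_const)).measurableSet
  have hNeg : ∫ x in P, gaussDensity A x = ∫ x in halfSpace ω 0, gaussDensity A x := by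
    have hmp : MeasurePreserving (fun x : EuclideanSpace ℝ (Fin n) => -x) volume volume :=
      (LinearIsometryEquiv.neg ℝ (E := EuclideanSpace ℝ (Fin n))).measurePreserving
    have hemb : MeasurableEmbedding (fun x : EuclideanSpace ℝ (Fin n) => -x) :=
      ((LinearIsometryEquiv.neg ℝ (E := EuclideanSpace ℝ (Fin n))).toHomeomorph).measurableEmbedding
    have h := hmp.setIntegral_preimage_emb hemb (gaussDensity A) (halfSpace ω 0)
    have hpre : (fun x : EuclideanSpace ℝ (Fin n) => -x) ⁻¹' (halfSpace ω 0) = P := by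
      ext x
      simp only [Set.mem_preimage, halfSpace, Set.mem_setOf_eq, hP, inner_neg_left]
      constructor <;> intro <;> linarith
    rw [hpre] at h
    rw [← h]
    exact (setIntegral_congr_fun hmeasP fun x _ => (gaussDensity_neg A x).symm)
  have hunion : ∫ x in halfSpace ω 0 ∪ P, gaussDensity A x
      = (∫ x in halfSpace ω 0, gaussDensity A x) + ∫ x in P, gaussDensity A x := by
    refine setIntegral_union ?_ hmeasP hInt.integrableOn hInt.integrableOn
    refine Set.disjoint_left.mpr fun x hx1 hx2 => ?_
    simp only [halfSpace, Set.mem_setOf_eq] at hx1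
    simp only [hP, Set.mem_setOf_eq] at hx2
    linarith
  have huniv : ∫ x in halfSpace ω 0 ∪ P, gaussDensity A x = ∫ x, gaussDensity A x := by
    have hae : (halfSpace ω 0 ∪ P : Set (EuclideanSpace ℝ (Fin n)))
        =ᵐ[volume] (Set.univ : Set (EuclideanSpace ℝ (Fin n))) := by
      rw [MeasureTheory.ae_eq_set]
      constructor
      · simp
      · refine measure_mono_null (fun x hx => ?_) (hyperplane_null ω hω)
        obtain ⟨-, hx2⟩ := hx
        simp only [halfSpace, hP, Set.mem_union, Set.mem_setOf_eq, not_or, not_lt] at hx2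
        simp only [Set.mem_setOf_eq]
        linarith [hx2.1, hx2.2]
    calc ∫ x in halfSpace ω 0 ∪ P, gaussDensity A x
        = ∫ x in (Set.univ : Set (EuclideanSpace ℝ (Fin n))), gaussDensity A x :=
          setIntegral_congr_set hae
      _ = ∫ x, gaussDensity A x := setIntegral_univ
  rw [two_mul]
  calc (∫ x in halfSpace ω 0, gaussDensity A x) + ∫ x in halfSpace ω 0, gaussDensity A x
      = (∫ x in halfSpace ω 0, gaussDensity A x) + ∫ x in P, gaussDensity A x := by rw [hNeg]
    _ = ∫ x, gaussDensity A x := by rw [← hunion, huniv]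

lemma setIntegral_image_linIso (U : EuclideanSpace ℝ (Fin n) ≃ₗᵢ[ℝ] EuclideanSpace ℝ (Fin n))
    (f : EuclideanSpace ℝ (Fin n) → ℝ) (s : Set (EuclideanSpace ℝ (Fin n))) :
    ∫ x in U '' s, f x = ∫ x in s, f (U x) :=
  U.measurePreserving.setIntegral_image_emb (U.toHomeomorph.measurableEmbedding) f s

lemma setIntegral_image_linIso_hausdorff
    (U : EuclideanSpace ℝ (Fin n) ≃ₗᵢ[ℝ] EuclideanSpace ℝ (Fin n)) (d : ℝ)
    (f : EuclideanSpace ℝ (Fin n) → ℝ) (s : Set (EuclideanSpace ℝ (Fin n))) :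
    ∫ x in U '' s, f x ∂(μH[d]) = ∫ x in s, f (U x) ∂(μH[d]) := by
  have hmp := U.toIsometryEquiv.measurePreserving_hausdorffMeasure d
  rw [LinearIsometryEquiv.coe_toIsometryEquiv] at hmp
  exact hmp.setIntegral_image_emb (U.toHomeomorph.measurableEmbedding) f s

lemma mass_strictMono (hInt : Integrable (gaussDensity A)) (ω : EuclideanSpace ℝ (Fin n))
    (hω : ‖ω‖ = 1) :
    StrictMono (fun t : ℝ => ∫ x in halfSpace ω t, gaussDensity A x) := by
  intro t t' htt
  have hsub : halfSpace ω t ⊆ halfSpace ω t' := fun x hx => lt_trans hx htt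
  have hdecomp : ∫ x in halfSpace ω t', gaussDensity A x
      = (∫ x in halfSpace ω t, gaussDensity A x)
        + ∫ x in halfSpace ω t' \ halfSpace ω t, gaussDensity A x := by
    have h := setIntegral_union (f := gaussDensity A) (μ := volume)
      (disjoint_sdiff_self_right (x := halfSpace ω t) (y := halfSpace ω t'))
      ((measurableSet_halfSpace ω t').diff (measurableSet_halfSpace ω t))
      hInt.integrableOn hInt.integrableOn
    rwa [Set.union_diff_cancel hsub] at h
  have hO : IsOpen ({x : EuclideanSpace ℝ (Fin n) | t < (inner ℝ x ω : ℝ)} ∩ halfSpace ω t') := by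
    refine IsOpen.inter ?_ (isOpen_lt (continuous_id.inner continuous_const) continuous_const)
    exact isOpen_lt continuous_const (continuous_id.inner continuous_const)
  set O := {x : EuclideanSpace ℝ (Fin n) | t < (inner ℝ x ω : ℝ)} ∩ halfSpace ω t' with hOdef
  have hOne : O.Nonempty := by
    refine ⟨((t + t') / 2) • ω, ?_, ?_⟩
    · simp only [Set.mem_setOf_eq, real_inner_smul_left]
      rw [real_inner_self_eq_norm_sq, hω]
      nlinarith
    · simp only [halfSpace, Set.mem_setOf_eq, real_inner_smul_left]
      rw [real_inner_self_eq_norm_sq, hω]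
      nlinarith
  have hOsub : O ⊆ halfSpace ω t' \ halfSpace ω t := by
    rintro x ⟨hx1, hx2⟩
    exact ⟨hx2, by simp only [halfSpace, Set.mem_setOf_eq] at hx1 ⊢; linarith [hx1]⟩
  have hpos : 0 < ∫ x in O, gaussDensity A x := by
    rw [setIntegral_pos_iff_support_of_nonneg_ae
      (Filter.Eventually.of_forall fun x => (gaussDensity_pos A x).le) hInt.integrableOn]
    have hsupp : Function.support (gaussDensity A) = Set.univ :=
      Set.eq_univ_iff_forall.mpr fun x => (gaussDensity_pos A x).ne'
    rw [hsupp, Set.univ_inter]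
    exact hO.measure_pos volume hOne
  have hmono : ∫ x in O, gaussDensity A x
      ≤ ∫ x in halfSpace ω t' \ halfSpace ω t, gaussDensity A x := by
    refine setIntegral_mono_set hInt.integrableOn
      (Filter.Eventually.of_forall fun x => (gaussDensity_pos A x).le)
      (HasSubset.Subset.eventuallyLE hOsub)
  simp only []
  rw [hdecomp]
  linarith

lemma gaussDensity_integrable (hA : A.PosDef) : Integrable (gaussDensity A) := by
  set B := hA.1.eigenvectorBasis with hB
  have h : Integrable (fun y : EuclideanSpace ℝ (Fin n) => gaussDensity A (B.repr.symm y)) := by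
    simp_rw [hB, gaussDensity_diag A hA]
    exact gauss_integrable _ (fun j => hA.eigenvalues_pos j)
  exact (B.repr.symm.measurePreserving.integrable_comp_emb
    (B.repr.symm.toHomeomorph.measurableEmbedding)).mp h

lemma measurableSet_coord_lt {k : ℕ} (i : Fin k) :
    MeasurableSet {x : EuclideanSpace ℝ (Fin k) | x i < 0} := by
  have : Continuous fun y : EuclideanSpace ℝ (Fin k) => y i :=
    (continuous_apply i).comp (PiLp.continuous_ofLp 2 _)
  exact measurableSet_lt this.measurable measurable_const

/-- the perimeter of the halfspace orthogonal to the `i`-th eigenvector, through the origin. -/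
lemma perim_eigen {k : ℕ} {A : Matrix (Fin (k + 1)) (Fin (k + 1)) ℝ} (hA : A.PosDef)
    (c : ℝ≥0∞) (hc : (μH[((k : ℕ) : ℝ)] : Measure (EuclideanSpace ℝ (Fin k))) = c • volume)
    (i : Fin (k + 1)) :
    gaussPerim A (halfSpace (hA.1.eigenvectorBasis i) 0)
      = (Real.sqrt A.det / (2 * Real.pi) ^ ((((k + 1 : ℕ) : ℝ) - 1) / 2)) *
          (c.toReal * ∏ m : Fin k, Real.sqrt (2 * Real.pi / hA.1.eigenvalues (i.succAbove m))) := by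
  have hcast : (((k + 1 : ℕ) : ℝ) - 1) = ((k : ℕ) : ℝ) := by push_cast; ring
  have hhalf : halfSpace (hA.1.eigenvectorBasis i) 0
      = hA.1.eigenvectorBasis.repr.symm '' {x : EuclideanSpace ℝ (Fin (k + 1)) | x i < 0} := by
    rw [LinearIsometryEquiv.image_eq_preimage_symm, LinearIsometryEquiv.symm_symm]
    ext x
    simp only [halfSpace, Set.mem_setOf_eq, Set.mem_preimage,
      hA.1.eigenvectorBasis.repr_apply_apply]
    rw [real_inner_comm]
  have hbd : essBoundary (halfSpace (hA.1.eigenvectorBasis i) 0)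
      = hA.1.eigenvectorBasis.repr.symm '' {x : EuclideanSpace ℝ (Fin (k + 1)) | x i = 0} := by
    rw [hhalf, essBoundary_image _ (measurableSet_coord_lt i), essBoundary_coord_halfspace]
  show (Real.sqrt A.det / (2 * Real.pi) ^ ((((k + 1 : ℕ) : ℝ) - 1) / 2)) *
      ∫ x in essBoundary (halfSpace (hA.1.eigenvectorBasis i) 0) ∩ Set.univ,
        gaussDensity A x ∂(μH[((k + 1 : ℕ) : ℝ) - 1]) = _
  rw [Set.inter_univ, hbd, hcast,
    setIntegral_image_linIso_hausdorff (hA.1.eigenvectorBasis.repr.symm) ((k : ℕ) : ℝ)]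
  congr 1
  calc ∫ x in {x : EuclideanSpace ℝ (Fin (k + 1)) | x i = 0},
          gaussDensity A (hA.1.eigenvectorBasis.repr.symm x) ∂(μH[((k : ℕ) : ℝ)])
      = ∫ x in Set.range (embedAt i),
          Real.exp (-(∑ j, hA.1.eigenvalues j * x j ^ 2) / 2) ∂(μH[((k : ℕ) : ℝ)]) := by
        rw [embedAt_range i]
        refine setIntegral_congr_fun ?_ fun x _ => ?_
        · have : Continuous fun y : EuclideanSpace ℝ (Fin (k + 1)) => y i :=
            (continuous_apply i).comp (PiLp.continuous_ofLp 2 _)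
          exact measurableSet_eq_fun this.measurable measurable_const
        · exact gaussDensity_diag A hA x
    _ = ∫ z, Real.exp (-(∑ j, hA.1.eigenvalues j * (embedAt i z) j ^ 2) / 2)
          ∂(μH[((k : ℕ) : ℝ)] : Measure (EuclideanSpace ℝ (Fin k))) :=
        setIntegral_range_isometry (embedAt i) (embedAt_isometry i) _ (by positivity) _
    _ = ∫ z : EuclideanSpace ℝ (Fin k),
          Real.exp (-(∑ m, hA.1.eigenvalues (i.succAbove m) * z m ^ 2) / 2)
          ∂(μH[((k : ℕ) : ℝ)] : Measure (EuclideanSpace ℝ (Fin k))) := by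
        congr 1; funext z; rw [embedAt_sum i]
    _ = c.toReal * ∏ m : Fin k, Real.sqrt (2 * Real.pi / hA.1.eigenvalues (i.succAbove m)) := by
        rw [hc, integral_smul_measure, gauss_integral, smul_eq_mul]

end Aux

/-- For a symmetric positive definite `n×n` matrix `A` with `n ≥ 2`:
the anisotropic Gaussian perimeter assigns equal values to any two half-spaces of equal
`γ_A`-measure if and only if `A = a·I` for some `a > 0`. -/
theorem perim_halfSpaces_eq_iff_isotropic {n : ℕ} (hn : 2 ≤ n)
    (A : Matrix (Fin n) (Fin n) ℝ) (hA : A.PosDef) :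
    (∀ (ω₁ ω₂ : EuclideanSpace ℝ (Fin n)) (t₁ t₂ : ℝ), ‖ω₁‖ = 1 → ‖ω₂‖ = 1 →
        gaussMass A (halfSpace ω₁ t₁) = gaussMass A (halfSpace ω₂ t₂) →
        gaussPerim A (halfSpace ω₁ t₁) = gaussPerim A (halfSpace ω₂ t₂)) ↔
      ∃ a : ℝ, 0 < a ∧ A = a • (1 : Matrix (Fin n) (Fin n) ℝ) := by
  obtain ⟨k, rfl⟩ : ∃ k, n = k + 1 := ⟨n - 1, (Nat.succ_pred_eq_of_pos (by omega)).symm⟩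
  have hInt : Integrable (gaussDensity A) := gaussDensity_integrable A hA
  have hCpos : 0 < Real.sqrt A.det / (2 * Real.pi) ^ (((k + 1 : ℕ) : ℝ) / 2) :=
    div_pos (Real.sqrt_pos.mpr hA.det_pos)
      (Real.rpow_pos_of_pos (by positivity) _)
  constructor
  · -- equal perimeters for equal masses forces isotropy
    intro H
    obtain ⟨c, hc0, hct, hceq⟩ := hausdorff_eq_smul_volume k
    set B := hA.1.eigenvectorBasis with hB
    set lam := hA.1.eigenvalues with hlam
    have hlam_pos : ∀ j, 0 < lam j := fun j => hA.eigenvalues_pos j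
    have hnorm : ∀ i, ‖B i‖ = 1 := fun i => B.orthonormal.1 i
    have hne : ∀ i, B i ≠ 0 := fun i => fun h => by
      have := hnorm i; rw [h] at this; simp at this
    -- all eigenvalues coincide
    have hall : ∀ i j, lam i = lam j := by
      intro i j
      have hmass : gaussMass A (halfSpace (B i) 0) = gaussMass A (halfSpace (B j) 0) := by
        unfold gaussMass
        have h1 := setIntegral_halfSpace_zero A hInt (B i) (hne i)
        have h2 := setIntegral_halfSpace_zero A hInt (B j) (hne j)
        have : ∫ x in halfSpace (B i) 0, gaussDensity A x
            = ∫ x in halfSpace (B j) 0, gaussDensity A x := by linarith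
        rw [this]
      have hperim := H (B i) (B j) 0 0 (hnorm i) (hnorm j) hmass
      rw [perim_eigen hA c hceq i, perim_eigen hA c hceq j] at hperim
      have hc0' : (0 : ℝ) < c.toReal := ENNReal.toReal_pos hc0.ne' hct.ne
      have hC' : 0 < Real.sqrt A.det / (2 * Real.pi) ^ ((((k + 1 : ℕ) : ℝ) - 1) / 2) :=
        div_pos (Real.sqrt_pos.mpr hA.det_pos) (Real.rpow_pos_of_pos (by positivity) _)
      have hPij : (∏ m : Fin k, Real.sqrt (2 * Real.pi / lam (i.succAbove m)))
          = ∏ m : Fin k, Real.sqrt (2 * Real.pi / lam (j.succAbove m)) := by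
        have h1 := mul_left_cancel₀ hC'.ne' hperim
        exact mul_left_cancel₀ hc0'.ne' h1
      set f : Fin (k + 1) → ℝ := fun l => Real.sqrt (2 * Real.pi / lam l) with hf
      have hfpos : ∀ l, 0 < f l := fun l =>
        Real.sqrt_pos.mpr (div_pos (by positivity) (hlam_pos l))
      have hTi := Fin.prod_univ_succAbove f i
      have hTj := Fin.prod_univ_succAbove f j
      have hPpos : 0 < ∏ m : Fin k, f (i.succAbove m) :=
        Finset.prod_pos fun m _ => hfpos _
      have hfij : f i = f j := by
        have h1 : f i * ∏ m : Fin k, f (i.succAbove m)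
            = f j * ∏ m : Fin k, f (j.succAbove m) := by rw [← hTi, ← hTj]
        rw [← hPij] at h1
        exact mul_right_cancel₀ hPpos.ne' h1
      have hsq : ∀ l, f l ^ 2 = 2 * Real.pi / lam l := fun l =>
        Real.sq_sqrt (le_of_lt (div_pos (by positivity) (hlam_pos l)))
      have hlameq : ∀ l, lam l = 2 * Real.pi / f l ^ 2 := by
        intro l
        rw [hsq l, div_div_eq_mul_div, mul_comm, mul_div_assoc,
          div_self (show (2 * Real.pi) ≠ 0 by positivity), mul_one]
      rw [hlameq i, hlameq j, hfij]
    refine ⟨lam 0, hlam_pos 0, ?_⟩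
    -- A acts as lam 0 on the whole space
    have hAall : ∀ y : EuclideanSpace ℝ (Fin (k + 1)), matVec A y = lam 0 • y := by
      intro y
      rw [← matVecL_apply]
      conv_lhs => rw [← B.sum_repr y]
      rw [map_sum]
      have hterm : ∀ j, matVecL A (B.repr y j • B j) = lam 0 • (B.repr y j • B j) := by
        intro j
        rw [_root_.map_smul, matVecL_apply, matVec_eigen A hA j, ← hlam, hall j 0,
          smul_smul, mul_comm, ← smul_smul]
      calc ∑ j, matVecL A (B.repr y j • B j) = ∑ j, lam 0 • (B.repr y j • B j) :=
            Finset.sum_congr rfl fun j _ => hterm j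
        _ = lam 0 • ∑ j, B.repr y j • B j := (Finset.smul_sum).symm
        _ = lam 0 • y := by rw [B.sum_repr y]
    ext p q
    have h := congrFun (congrArg WithLp.ofLp (hAall (EuclideanSpace.single q 1))) p
    have hL : matVec A (EuclideanSpace.single q 1) p = A p q := by
      show (A *ᵥ (EuclideanSpace.single q 1).ofLp) p = A p q
      simp [Matrix.mulVec, dotProduct, EuclideanSpace.single_apply]
    have hR : (lam 0 • (EuclideanSpace.single q 1 : EuclideanSpace ℝ (Fin (k + 1)))) p
        = lam 0 * (if p = q then 1 else 0) := by
      simp [EuclideanSpace.single_apply]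
    rw [hL, hR] at h
    rw [h]
    simp [Matrix.smul_apply, Matrix.one_apply]
  · -- isotropy implies equal perimeters
    rintro ⟨a, ha, rfl⟩
    intro ω₁ ω₂ t₁ t₂ h1 h2 hmass
    set U : EuclideanSpace ℝ (Fin (k + 1)) ≃ₗᵢ[ℝ] EuclideanSpace ℝ (Fin (k + 1)) :=
      Submodule.reflection (ℝ ∙ (ω₁ - ω₂))ᗮ with hU
    have hUω : U ω₁ = ω₂ := Submodule.reflection_sub (by rw [h1, h2])
    have hdens : ∀ x, gaussDensity (a • (1 : Matrix (Fin (k + 1)) (Fin (k + 1)) ℝ)) x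
        = Real.exp (-(a * ‖x‖ ^ 2) / 2) := by
      intro x
      unfold gaussDensity
      have hmv : matVec (a • (1 : Matrix (Fin (k + 1)) (Fin (k + 1)) ℝ)) x = a • x := by
        show WithLp.toLp 2 ((a • (1 : Matrix (Fin (k + 1)) (Fin (k + 1)) ℝ)) *ᵥ x.ofLp) = _
        rw [Matrix.smul_mulVec, Matrix.one_mulVec, WithLp.toLp_smul, WithLp.toLp_ofLp]
      rw [hmv, real_inner_smul_left, real_inner_self_eq_norm_sq]
    have hdensU : ∀ x, gaussDensity (a • (1 : Matrix (Fin (k + 1)) (Fin (k + 1)) ℝ)) (U x)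
        = gaussDensity (a • (1 : Matrix (Fin (k + 1)) (Fin (k + 1)) ℝ)) x := by
      intro x; rw [hdens, hdens, U.norm_map]
    have himage : ∀ t, halfSpace ω₂ t = U '' halfSpace ω₁ t := by
      intro t
      rw [LinearIsometryEquiv.image_eq_preimage_symm]
      ext x
      simp only [halfSpace, Set.mem_setOf_eq, Set.mem_preimage]
      rw [show (inner ℝ (U.symm x) ω₁ : ℝ) = (inner ℝ x ω₂ : ℝ) from by
        rw [← hUω, ← U.inner_map_map, U.apply_symm_apply]]
    have hmassinv : ∀ t, gaussMass (a • (1 : Matrix (Fin (k + 1)) (Fin (k + 1)) ℝ))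
        (halfSpace ω₂ t) = gaussMass (a • (1 : Matrix (Fin (k + 1)) (Fin (k + 1)) ℝ))
        (halfSpace ω₁ t) := by
      intro t
      unfold gaussMass
      congr 1
      rw [himage t, setIntegral_image_linIso]
      simp only [hdensU]
    have ht : t₁ = t₂ := by
      rw [hmassinv t₂] at hmass
      unfold gaussMass at hmass
      have hmass2 : ∫ x in halfSpace ω₁ t₁,
            gaussDensity (a • (1 : Matrix (Fin (k + 1)) (Fin (k + 1)) ℝ)) x
          = ∫ x in halfSpace ω₁ t₂,
            gaussDensity (a • (1 : Matrix (Fin (k + 1)) (Fin (k + 1)) ℝ)) x :=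
        mul_left_cancel₀ hCpos.ne' hmass
      exact (mass_strictMono _ hInt ω₁ h1).injective hmass2
    subst ht
    unfold gaussPerim gaussPerimIn
    congr 1
    rw [himage t₁, essBoundary_image U (measurableSet_halfSpace ω₁ t₁), Set.inter_univ,
      Set.inter_univ, setIntegral_image_linIso_hausdorff]
    simp only [hdensU]
end
end

section
/- For a symmetric positive definite matrix A, a unit vector ω, and t ∈ ℝ, the A-anisotropic Gaussian barycenter of the half-space H(ω,t) equals (−1/√(2π)) · exp(−t²/(2|(√A)⁻¹ω|²)) · (A⁻¹ω/|(√A)⁻¹ω|). -/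
open MeasureTheory Metric Filter Set Matrix
open scoped ENNReal Topology RealInnerProductSpace Pointwise

noncomputable section

lemma integrable_exp_half : Integrable (fun x : ℝ => Real.exp (-x^2/2)) := by
  have := integrable_exp_neg_mul_sq (b := (1/2 : ℝ)) (by norm_num)
  convert this using 2 with x
  ring_nf

lemma integral_exp_half : ∫ x : ℝ, Real.exp (-x^2/2) = Real.sqrt (2*Real.pi) := by
  have := integral_gaussian (1/2 : ℝ)
  rw [show Real.pi / (1/2) = 2 * Real.pi by ring] at this
  rw [← this]
  congr 1 with x
  ring_nf

lemma integrable_id_exp_half : Integrable (fun x : ℝ => x * Real.exp (-x^2/2)) := by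
  have := integrable_mul_exp_neg_mul_sq (b := (1/2 : ℝ)) (by norm_num)
  convert this using 2 with x
  ring_nf

lemma integral_id_exp_half : ∫ x : ℝ, x * Real.exp (-x^2/2) = 0 := by
  have h2 := integral_neg_eq_self (fun y => y * Real.exp (-y^2/2)) (volume : Measure ℝ)
  simp only [neg_sq] at h2
  have h3 : ∫ x : ℝ, (-x) * Real.exp (-x^2/2) = - ∫ x : ℝ, x * Real.exp (-x^2/2) := by
    rw [← integral_neg]
    congr 1 with x
    ring
  linarith [h2, h3]

lemma integral_id_exp_half_Iio (s : ℝ) :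
    ∫ x in Iio s, x * Real.exp (-x^2/2) = -Real.exp (-s^2/2) := by
  have key : ∫ x in Ioi (-s), -x * Real.exp (-x^2/2) = 0 - Real.exp (-(-s)^2/2) := by
    apply integral_Ioi_of_hasDerivAt_of_tendsto'
      (f := fun x => Real.exp (-x^2/2)) (m := 0)
    · intro x _
      have h1 : HasDerivAt (fun x : ℝ => -x^2/2) (-x) x := by
        have := ((hasDerivAt_pow 2 x).neg).div_const 2
        exact this.congr_deriv (by push_cast; ring)
      have := (Real.hasDerivAt_exp (-x^2/2)).comp x h1
      exact this.congr_deriv (by ring)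
    · exact (integrable_id_exp_half.neg.congr (by
        filter_upwards with x
        show -(x * Real.exp (-x^2/2)) = -x * Real.exp (-x^2/2)
        ring)).integrableOn
    · have h : Tendsto (fun x : ℝ => -x^2/2) atTop atBot := by
        apply Tendsto.atBot_div_const (by norm_num)
        exact tendsto_neg_atBot_iff.mpr (tendsto_pow_atTop (by norm_num))
      exact Real.tendsto_exp_atBot.comp h
  have h2 := integral_comp_neg_Ioi (-s) (fun y => y * Real.exp (-y^2/2))
  simp only [neg_neg, neg_sq] at h2
  rw [← integral_Iic_eq_integral_Iio, ← h2]
  have h4 : ∫ x in Ioi (-s), (-x) * Real.exp (-x^2/2)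
      = ∫ x in Ioi (-s), -x * Real.exp (-x^2/2) := rfl
  rw [h4, key]
  ring_nf



/-- The factor functions. -/
def gbF {n : ℕ} (i i0 : Fin n) (s : ℝ) : Fin n → ℝ → ℝ := fun j =>
  (if j = i0 then Set.indicator (Iio s) else id)
    (fun r => (if j = i then r else 1) * Real.exp (-r^2/2))

lemma gbF_integrable {n : ℕ} (i i0 : Fin n) (s : ℝ) (j : Fin n) :
    Integrable (gbF i i0 s j) := by
  have base : Integrable (fun r : ℝ => (if j = i then r else 1) * Real.exp (-r^2/2)) := by
    by_cases h : j = i <;> simp only [h, if_pos, if_neg, if_true, if_false, one_mul]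
    · exact integrable_id_exp_half
    · simpa using integrable_exp_half
  unfold gbF
  by_cases h0 : j = i0
  · rw [if_pos h0]
    exact base.indicator measurableSet_Iio
  · simpa only [if_neg h0, id] using base

lemma gbF_indicator_eq_prod {n : ℕ} (i i0 : Fin n) (s : ℝ) :
    Set.indicator {z : Fin n → ℝ | z i0 < s}
        (fun z => Real.exp (-(∑ j, (z j)^2)/2) * z i)
      = fun z => ∏ j, gbF i i0 s j (z j) := by
  funext z
  have hprod : ∀ z : Fin n → ℝ,
      (∏ j, (fun r => (if j = i then r else 1) * Real.exp (-r^2/2)) (z j))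
        = Real.exp (-(∑ j, (z j)^2)/2) * z i := by
    intro z
    rw [Finset.prod_mul_distrib]
    rw [Finset.prod_ite_eq' Finset.univ i (fun j => z j)]
    rw [← Real.exp_sum]
    have : ∑ j, -(z j)^2/2 = -(∑ j, (z j)^2)/2 := by
      rw [← Finset.sum_div, ← Finset.sum_neg_distrib]
    rw [this]
    simp [mul_comm]
  by_cases h : z i0 < s
  · have hz : z ∈ {z : Fin n → ℝ | z i0 < s} := h
    rw [Set.indicator_of_mem hz]
    rw [show (∏ j, gbF i i0 s j (z j)) = ∏ j, (fun r =>
        (if j = i then r else 1) * Real.exp (-r^2/2)) (z j) by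
      apply Finset.prod_congr rfl
      intro j _
      unfold gbF
      by_cases h0 : j = i0
      · rw [if_pos h0]
        exact Set.indicator_of_mem (by rw [h0]; exact h) _
      · rw [if_neg h0]; rfl]
    rw [hprod]
  · have hz : z ∉ {z : Fin n → ℝ | z i0 < s} := h
    rw [Set.indicator_of_notMem hz]
    symm
    apply Finset.prod_eq_zero (Finset.mem_univ i0)
    unfold gbF
    rw [if_pos rfl]
    exact Set.indicator_of_notMem (show z i0 ∉ Iio s from h) _

lemma pi_core {n : ℕ} (i i0 : Fin n) (s : ℝ) :
    (∫ z : Fin n → ℝ, Set.indicator {z : Fin n → ℝ | z i0 < s}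
        (fun z => Real.exp (-(∑ j, (z j)^2)/2) * z i) z)
      = if i = i0 then -Real.exp (-s^2/2) * Real.sqrt (2*Real.pi)^(n-1) else 0 := by
  rw [gbF_indicator_eq_prod]
  rw [MeasureTheory.integral_fintype_prod_volume_eq_prod (gbF i i0 s)]
  by_cases h : i = i0
  · subst h
    rw [if_pos rfl]
    rw [← Finset.mul_prod_erase Finset.univ _ (Finset.mem_univ i)]
    have h1 : ∫ x, gbF i i s i x = -Real.exp (-s^2/2) := by
      unfold gbF
      rw [if_pos rfl]
      have : (fun r : ℝ => (if i = i then r else 1) * Real.exp (-r^2/2))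
          = fun r : ℝ => r * Real.exp (-r^2/2) := by
        funext r; rw [if_pos rfl]
      rw [this, integral_indicator measurableSet_Iio]
      exact integral_id_exp_half_Iio s
    have h2 : ∀ j ∈ Finset.univ.erase i, ∫ x, gbF i i s j x = Real.sqrt (2*Real.pi) := by
      intro j hj
      have hji : j ≠ i := Finset.ne_of_mem_erase hj
      unfold gbF
      simp only [if_neg hji, id, one_mul]
      exact integral_exp_half
    rw [Finset.prod_congr rfl h2, h1, Finset.prod_const,
      Finset.card_erase_of_mem (Finset.mem_univ i), Finset.card_univ, Fintype.card_fin]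
  · rw [if_neg h]
    apply Finset.prod_eq_zero (Finset.mem_univ i)
    unfold gbF
    rw [if_neg h]
    have h5 : id (fun r : ℝ => (if i = i then r else 1) * Real.exp (-r^2/2))
        = fun r : ℝ => r * Real.exp (-r^2/2) := by
      funext r; simp
    rw [h5]
    exact integral_id_exp_half




lemma euclid_norm_sq {n : ℕ} (y : EuclideanSpace ℝ (Fin n)) :
    ‖y‖^2 = ∑ j, (y j)^2 := by
  rw [EuclideanSpace.norm_eq, Real.sq_sqrt (by positivity)]
  simp [sq_abs]

section scalar
variable {n : ℕ} (i i0 : Fin n) (s : ℝ)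

lemma euclid_comp_eq :
    (fun z : Fin n → ℝ =>
      Set.indicator {y : EuclideanSpace ℝ (Fin n) | y i0 < s}
        (fun y => Real.exp (-‖y‖^2/2) * y i)
        ((MeasurableEquiv.toLp 2 (Fin n → ℝ)) z))
      = Set.indicator {z : Fin n → ℝ | z i0 < s}
        (fun z => Real.exp (-(∑ j, (z j)^2)/2) * z i) := by
  funext z
  have happ : ∀ j, ((MeasurableEquiv.toLp 2 (Fin n → ℝ)) z :
      EuclideanSpace ℝ (Fin n)) j = z j := fun _ => rfl
  by_cases h : z i0 < s
  · have h1 : ((MeasurableEquiv.toLp 2 (Fin n → ℝ)) z) ∈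
        {y : EuclideanSpace ℝ (Fin n) | y i0 < s} := by
      show ((MeasurableEquiv.toLp 2 (Fin n → ℝ)) z : EuclideanSpace ℝ (Fin n)) i0 < s
      rw [happ]; exact h
    have h2 : z ∈ {z : Fin n → ℝ | z i0 < s} := h
    rw [Set.indicator_of_mem h1, Set.indicator_of_mem h2]
    rw [euclid_norm_sq]
    simp_rw [happ]
  · have h1 : ((MeasurableEquiv.toLp 2 (Fin n → ℝ)) z) ∉
        {y : EuclideanSpace ℝ (Fin n) | y i0 < s} := by
      show ¬ ((MeasurableEquiv.toLp 2 (Fin n → ℝ)) z : EuclideanSpace ℝ (Fin n)) i0 < s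
      rw [happ]; exact h
    have h2 : z ∉ {z : Fin n → ℝ | z i0 < s} := h
    rw [Set.indicator_of_notMem h1, Set.indicator_of_notMem h2]

lemma euclid_scalar_integrable :
    Integrable (Set.indicator {y : EuclideanSpace ℝ (Fin n) | y i0 < s}
      (fun y => Real.exp (-‖y‖^2/2) * y i)) := by
  refine ((((EuclideanSpace.volume_preserving_symm_measurableEquiv_toLp (Fin n)).symm).integrable_comp_emb
    (MeasurableEquiv.toLp 2 (Fin n → ℝ)).measurableEmbedding)).mp ?_
  rw [Function.comp_def, MeasurableEquiv.symm_symm, euclid_comp_eq, gbF_indicator_eq_prod]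
  exact Integrable.fintype_prod (𝕜 := ℝ) (fun j => gbF_integrable i i0 s j)

lemma euclid_scalar :
    (∫ y : EuclideanSpace ℝ (Fin n),
      Set.indicator {y : EuclideanSpace ℝ (Fin n) | y i0 < s}
        (fun y => Real.exp (-‖y‖^2/2) * y i) y)
      = if i = i0 then -Real.exp (-s^2/2) * Real.sqrt (2*Real.pi)^(n-1) else 0 := by
  rw [← ((EuclideanSpace.volume_preserving_symm_measurableEquiv_toLp (Fin n)).symm).integral_comp']
  show (∫ z : Fin n → ℝ, Set.indicator {y : EuclideanSpace ℝ (Fin n) | y i0 < s}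
      (fun y => Real.exp (-‖y‖^2/2) * y i)
      ((MeasurableEquiv.toLp 2 (Fin n → ℝ)) z)) = _
  rw [euclid_comp_eq]
  exact pi_core i i0 s

end scalar

lemma euclid_vector_decomp {n : ℕ} (i0 : Fin n) (s : ℝ) :
    Set.indicator {y : EuclideanSpace ℝ (Fin n) | y i0 < s}
        (fun y => Real.exp (-‖y‖^2/2) • y)
      = fun y => ∑ i, (Set.indicator {y : EuclideanSpace ℝ (Fin n) | y i0 < s}
          (fun y => Real.exp (-‖y‖^2/2) * y i) y) • EuclideanSpace.single i (1:ℝ) := by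
  funext y
  by_cases h : y ∈ {y : EuclideanSpace ℝ (Fin n) | y i0 < s}
  · rw [Set.indicator_of_mem h]
    simp_rw [Set.indicator_of_mem h]
    have hy : ∑ i, y i • EuclideanSpace.single i (1:ℝ) = y := by
      have h1 := (EuclideanSpace.basisFun (Fin n) ℝ).sum_repr y
      simpa [EuclideanSpace.basisFun_repr, EuclideanSpace.basisFun_apply] using h1
    calc Real.exp (-‖y‖^2/2) • y
        = Real.exp (-‖y‖^2/2) • ∑ i, y i • EuclideanSpace.single i (1:ℝ) := by rw [hy]
      _ = ∑ i, (Real.exp (-‖y‖^2/2) * y i) • EuclideanSpace.single i (1:ℝ) := by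
          rw [Finset.smul_sum]
          refine Finset.sum_congr rfl (fun i _ => ?_)
          rw [smul_smul]
  · rw [Set.indicator_of_notMem h]
    simp_rw [Set.indicator_of_notMem h]
    simp

lemma euclid_vector {n : ℕ} (i0 : Fin n) (s : ℝ) :
    (∫ y : EuclideanSpace ℝ (Fin n),
      Set.indicator {y : EuclideanSpace ℝ (Fin n) | y i0 < s}
        (fun y => Real.exp (-‖y‖^2/2) • y) y)
      = (-Real.exp (-s^2/2) * Real.sqrt (2*Real.pi)^(n-1)) •
          EuclideanSpace.single i0 (1:ℝ) := by
  rw [euclid_vector_decomp]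
  rw [integral_finset_sum _ (fun i _ =>
    (euclid_scalar_integrable i i0 s).smul_const (EuclideanSpace.single i (1:ℝ)))]
  simp_rw [integral_smul_const, euclid_scalar]
  rw [Finset.sum_eq_single i0]
  · rw [if_pos rfl]
  · intro b _ hb
    rw [if_neg hb, zero_smul]
  · intro hh
    exact absurd (Finset.mem_univ i0) hh

lemma euclid_vector_integrable {n : ℕ} (i0 : Fin n) (s : ℝ) :
    Integrable (Set.indicator {y : EuclideanSpace ℝ (Fin n) | y i0 < s}
        (fun y => Real.exp (-‖y‖^2/2) • y)) := by
  rw [euclid_vector_decomp]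
  exact integrable_finset_sum _ (fun i _ =>
    (euclid_scalar_integrable i i0 s).smul_const (EuclideanSpace.single i (1:ℝ)))





lemma matVec_matVec {n : ℕ} (M N : Matrix (Fin n) (Fin n) ℝ) (x : EuclideanSpace ℝ (Fin n)) :
    matVec M (matVec N x) = matVec (M * N) x := by
  simp [matVec, Matrix.mulVec_mulVec]
  rw [← Matrix.mulVec_mulVec]; rfl

lemma matVec_one {n : ℕ} (x : EuclideanSpace ℝ (Fin n)) : matVec 1 x = x := by
  simp [matVec]

lemma matVec_clm {n : ℕ} (M : Matrix (Fin n) (Fin n) ℝ) (x : EuclideanSpace ℝ (Fin n)) :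
    matVec M x = Matrix.toEuclideanCLM (𝕜 := ℝ) M x := rfl

lemma inner_matVec {n : ℕ} (M : Matrix (Fin n) (Fin n) ℝ) (x y : EuclideanSpace ℝ (Fin n)) :
    ⟪matVec M x, y⟫ = ⟪x, matVec Mᵀ y⟫ := by
  simp only [matVec]
  rw [show ⟪(EuclideanSpace.equiv (Fin n) ℝ).symm (M.mulVec (EuclideanSpace.equiv (Fin n) ℝ x)),
      y⟫ = dotProduct (M.mulVec (fun i => x i)) (fun i => y i) from ?_,
    show ⟪x, (EuclideanSpace.equiv (Fin n) ℝ).symm (Mᵀ.mulVec (EuclideanSpace.equiv (Fin n) ℝ y))⟫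
      = dotProduct (fun i => x i) (Mᵀ.mulVec (fun i => y i)) from ?_]
  · rw [dotProduct_mulVec, Matrix.vecMul_transpose]
  · rw [PiLp.inner_apply]
    simp [dotProduct, RCLike.inner_apply, mul_comm]
    exact Finset.sum_congr rfl (fun _ _ => mul_comm _ _)
  · rw [PiLp.inner_apply]
    simp [dotProduct, RCLike.inner_apply]
    exact Finset.sum_congr rfl (fun _ _ => mul_comm _ _)




lemma std {n : ℕ} (hn : 0 < n) (u : EuclideanSpace ℝ (Fin n)) (hu : ‖u‖ = 1) (s : ℝ) :
    Integrable (Set.indicator {y : EuclideanSpace ℝ (Fin n) | ⟪y, u⟫ < s}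
      (fun y => Real.exp (-‖y‖^2/2) • y)) ∧
    (∫ y, Set.indicator {y : EuclideanSpace ℝ (Fin n) | ⟪y, u⟫ < s}
      (fun y => Real.exp (-‖y‖^2/2) • y) y)
    = (-Real.exp (-s^2/2) * Real.sqrt (2*Real.pi)^(n-1)) • u := by
  set i0 : Fin n := ⟨0, hn⟩
  have horth : Orthonormal ℝ (({i0} : Set (Fin n)).restrict (fun _ => u)) := by
    constructor
    · intro i
      exact hu
    · intro i j hij
      exact absurd (Subsingleton.elim i j) hij
  obtain ⟨b, hb⟩ := horth.exists_orthonormalBasis_extension_of_card_eq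
    (by simp [finrank_euclideanSpace_fin])
  have hbu : b i0 = u := hb i0 rfl
  set L : EuclideanSpace ℝ (Fin n) ≃ₗᵢ[ℝ] EuclideanSpace ℝ (Fin n) := b.repr.symm with hL
  have hLu : L (EuclideanSpace.single i0 (1:ℝ)) = u := by
    rw [hL, b.repr_symm_single, hbu]
  have hMP : MeasurePreserving L volume volume := b.measurePreserving_repr_symm
  have hemb : MeasurableEmbedding L := L.toHomeomorph.measurableEmbedding
  -- key pointwise identity
  have hcomp : ∀ z : EuclideanSpace ℝ (Fin n),
      Set.indicator {y : EuclideanSpace ℝ (Fin n) | ⟪y, u⟫ < s}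
        (fun y => Real.exp (-‖y‖^2/2) • y) (L z)
      = L (Set.indicator {y : EuclideanSpace ℝ (Fin n) | y i0 < s}
          (fun y => Real.exp (-‖y‖^2/2) • y) z) := by
    intro z
    have hmem : (L z ∈ {y : EuclideanSpace ℝ (Fin n) | ⟪y, u⟫ < s})
        ↔ (z ∈ {y : EuclideanSpace ℝ (Fin n) | y i0 < s}) := by
      show ⟪L z, u⟫ < s ↔ z i0 < s
      rw [← hLu, L.inner_map_map]
      rw [show ⟪z, EuclideanSpace.single i0 (1:ℝ)⟫ = z i0 by
        rw [EuclideanSpace.inner_single_right]; simp]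
    by_cases h : z ∈ {y : EuclideanSpace ℝ (Fin n) | y i0 < s}
    · rw [Set.indicator_of_mem (hmem.mpr h), Set.indicator_of_mem h]
      rw [L.norm_map, L.map_smul]
    · rw [Set.indicator_of_notMem (fun hh => h (hmem.mp hh)), Set.indicator_of_notMem h,
        map_zero]
  constructor
  · refine (hMP.integrable_comp_emb hemb).mp ?_
    rw [Function.comp_def]
    simp_rw [hcomp]
    exact L.toContinuousLinearEquiv.toContinuousLinearMap.integrable_comp
      (euclid_vector_integrable i0 s)
  · rw [← hMP.integral_comp hemb]
    simp_rw [hcomp]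
    have hcc := L.toLinearIsometry.integral_comp_comm
      (μ := (volume : Measure (EuclideanSpace ℝ (Fin n))))
      (Set.indicator {y : EuclideanSpace ℝ (Fin n) | y i0 < s}
        (fun y => Real.exp (-‖y‖^2/2) • y))
    have hLL : ∀ x, L.toLinearIsometry x = L x := fun _ => rfl
    simp_rw [hLL] at hcc
    rw [hcc, euclid_vector i0 s, L.map_smul, hLu]


/-- For a symmetric positive definite matrix `A` with square root `B`,
a unit vector `ω` and `t ∈ ℝ`, the `A`-anisotropic Gaussian barycenter of the half-space
`H(ω,t)` equals `(−1/√(2π))·exp(−t²/(2|(√A)⁻¹ω|²))·(A⁻¹ω/|(√A)⁻¹ω|)`. -/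
theorem gaussBary_halfSpace {n : ℕ} (A B : Matrix (Fin n) (Fin n) ℝ)
    (hA : A.PosDef) (hB : B.PosDef) (hBA : B * B = A)
    (ω : EuclideanSpace ℝ (Fin n)) (hω : ‖ω‖ = 1) (t : ℝ) :
    gaussBary A (halfSpace ω t) =
      (-(Real.sqrt (2 * Real.pi))⁻¹ * Real.exp (- t ^ 2 / (2 * ‖matVec (B⁻¹) ω‖ ^ 2)) *
          (‖matVec (B⁻¹) ω‖)⁻¹) • matVec (A⁻¹) ω := by
  have hn : 0 < n := by
    rcases Nat.eq_zero_or_pos n with h0 | h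
    · exfalso
      subst h0
      have : ‖ω‖ = 0 := by
        rw [EuclideanSpace.norm_eq]
        simp
      rw [this] at hω
      exact zero_ne_one hω
    · exact h
  -- matrix basics
  have hdetB : 0 < B.det := hB.det_pos
  have hBunit : IsUnit B.det := isUnit_iff_ne_zero.mpr hdetB.ne'
  have hBBinv : B * B⁻¹ = 1 := Matrix.mul_nonsing_inv B hBunit
  have hBinvB : B⁻¹ * B = 1 := Matrix.nonsing_inv_mul B hBunit
  have hBsymm : Bᵀ = B := by
    have h1 := hB.1
    rwa [Matrix.IsHermitian, Matrix.conjTranspose_eq_transpose_of_trivial] at h1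
  have hBinvT : (B⁻¹)ᵀ = B⁻¹ := by
    rw [Matrix.transpose_nonsing_inv, hBsymm]
  have hAinv : B⁻¹ * B⁻¹ = A⁻¹ := by
    rw [← hBA, Matrix.mul_inv_rev]
  have hABinv : A * B⁻¹ = B := by
    rw [← hBA, Matrix.mul_assoc, hBBinv, mul_one]
  have hBx : ∀ x : EuclideanSpace ℝ (Fin n), matVec B (matVec B⁻¹ x) = x := by
    intro x; rw [matVec_matVec, hBBinv, matVec_one]
  have hBx' : ∀ x : EuclideanSpace ℝ (Fin n), matVec B⁻¹ (matVec B x) = x := by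
    intro x; rw [matVec_matVec, hBinvB, matVec_one]
  have hswap : ∀ x y : EuclideanSpace ℝ (Fin n), ⟪matVec B⁻¹ x, y⟫ = ⟪x, matVec B⁻¹ y⟫ := by
    intro x y; rw [inner_matVec, hBinvT]
  -- the direction vector
  set v : EuclideanSpace ℝ (Fin n) := matVec B⁻¹ ω with hv
  have hv_ne : v ≠ 0 := by
    intro h0
    have : ω = 0 := by
      have := hBx ω
      rw [← hv, h0] at this
      rw [← this]
      simp [matVec]
    rw [this, norm_zero] at hω
    exact zero_ne_one hω
  set c0 : ℝ := ‖v‖ with hc0def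
  have hc0 : 0 < c0 := norm_pos_iff.mpr hv_ne
  set u : EuclideanSpace ℝ (Fin n) := c0⁻¹ • v with hu_def
  have hu : ‖u‖ = 1 := by
    rw [hu_def, norm_smul, norm_inv, norm_norm, ← hc0def, inv_mul_cancel₀ hc0.ne']
  set s : ℝ := t / c0 with hs_def
  -- measurable halfspace
  have hHmeas : MeasurableSet (halfSpace ω t) := by
    have hcont : Continuous fun x : EuclideanSpace ℝ (Fin n) => (inner ℝ x ω : ℝ) :=
      continuous_id.inner continuous_const
    exact measurableSet_lt hcont.measurable measurable_const
  -- CLM and derivative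
  set clm : EuclideanSpace ℝ (Fin n) →L[ℝ] EuclideanSpace ℝ (Fin n) :=
    Matrix.toEuclideanCLM (𝕜 := ℝ) B⁻¹ with hclm
  have hdet : clm.det = B.det⁻¹ := by
    show LinearMap.det (clm : EuclideanSpace ℝ (Fin n) →ₗ[ℝ] EuclideanSpace ℝ (Fin n)) = _
    rw [hclm, Matrix.coe_toEuclideanCLM_eq_toEuclideanLin]
    rw [show Matrix.toEuclideanLin (B⁻¹) = Matrix.toLin (PiLp.basisFun 2 ℝ (Fin n))
      (PiLp.basisFun 2 ℝ (Fin n)) (B⁻¹) from congrFun (congrArg _ Matrix.toEuclideanLin_eq_toLin) _]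
    rw [LinearMap.det_toLin]
    rw [Matrix.det_nonsing_inv, Ring.inverse_eq_inv']
  have habs : |clm.det| = B.det⁻¹ := by
    rw [hdet, abs_of_pos (inv_pos.mpr hdetB)]
  -- the standard Gaussian integrand
  set gstd : EuclideanSpace ℝ (Fin n) → EuclideanSpace ℝ (Fin n) :=
    fun y => Real.exp (-‖y‖^2/2) • y with hgstd
  set S : Set (EuclideanSpace ℝ (Fin n)) := {x | ⟪x, u⟫ < s} with hS
  have hSv : S = {x : EuclideanSpace ℝ (Fin n) | ⟪x, v⟫ < t} := by
    ext x
    show ⟪x, u⟫ < s ↔ ⟪x, v⟫ < t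
    rw [hu_def, real_inner_smul_right, hs_def]
    rw [div_eq_inv_mul]
    exact mul_lt_mul_iff_right₀ (inv_pos.mpr hc0)
  obtain ⟨hint, hval⟩ := std hn u hu s
  -- change of variables
  have key : (∫ x in halfSpace ω t, gaussDensity A x • x)
      = B.det⁻¹ • clm (∫ y, Set.indicator S gstd y) := by
    rw [← integral_indicator hHmeas]
    have hsurj : Function.Surjective (fun x => clm x) := by
      intro x
      refine ⟨matVec B x, ?_⟩
      show clm (matVec B x) = x
      rw [hclm, ← matVec_clm, hBx']
    have himg : (fun x => clm x) '' univ = univ := by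
      rw [Set.image_univ, Set.range_eq_univ.mpr hsurj]
    have hinj : Set.InjOn (fun x => clm x) univ := by
      intro a _ b _ hab
      have h2 := congrArg (matVec B) hab
      simp only [hclm, ← matVec_clm] at h2
      rwa [hBx, hBx] at h2
    have hfd : ∀ x ∈ (univ : Set (EuclideanSpace ℝ (Fin n))),
        HasFDerivWithinAt (fun x => clm x) clm univ x :=
      fun x _ => clm.hasFDerivAt.hasFDerivWithinAt
    have hcov := integral_image_eq_integral_abs_det_fderiv_smul volume MeasurableSet.univ
      hfd hinj (Set.indicator (halfSpace ω t) (fun x => gaussDensity A x • x))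
    rw [himg] at hcov
    rw [← setIntegral_univ, hcov, setIntegral_univ]
    -- now rewrite the integrand
    have hptwise : ∀ x : EuclideanSpace ℝ (Fin n),
        |clm.det| • Set.indicator (halfSpace ω t)
          (fun x => gaussDensity A x • x) (clm x)
        = B.det⁻¹ • clm (Set.indicator S gstd x) := by
      intro x
      rw [habs]
      congr 1
      have hmem : (clm x ∈ halfSpace ω t) ↔ x ∈ S := by
        show (inner ℝ (clm x) ω : ℝ) < t ↔ x ∈ S
        rw [hSv]
        show (inner ℝ (clm x) ω : ℝ) < t ↔ ⟪x, v⟫ < t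
        rw [← matVec_clm, hswap, ← hv]
      by_cases h : x ∈ S
      · rw [Set.indicator_of_mem (hmem.mpr h), Set.indicator_of_mem h]
        have hρ : gaussDensity A (clm x) = Real.exp (-‖x‖^2/2) := by
          rw [gaussDensity, ← matVec_clm]
          congr 2
          rw [matVec_matVec, hABinv]
          rw [show ⟪matVec B x, matVec B⁻¹ x⟫ = ⟪matVec B⁻¹ (matVec B x), x⟫ from
            (hswap (matVec B x) x).symm]
          rw [hBx', real_inner_self_eq_norm_sq]
        rw [hρ, hgstd]
        show Real.exp (-‖x‖^2/2) • clm x = clm (Real.exp (-‖x‖^2/2) • x)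
        rw [ContinuousLinearMap.map_smul]
      · rw [Set.indicator_of_notMem (fun hh => h (hmem.mp hh)),
          Set.indicator_of_notMem h, map_zero]
    rw [show (fun x => |clm.det| • Set.indicator (halfSpace ω t)
        (fun x => gaussDensity A x • x) (clm x))
      = fun x => B.det⁻¹ • clm (Set.indicator S gstd x) from funext hptwise]
    rw [integral_smul]
    congr 1
    exact clm.integral_comp_comm hint
  -- final assembly
  rw [gaussBary, key, hval]
  have hsqA : Real.sqrt A.det = B.det := by
    rw [← hBA, Matrix.det_mul, Real.sqrt_mul_self hdetB.le]
  have hclmu : clm u = c0⁻¹ • matVec A⁻¹ ω := by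
    rw [hu_def, ContinuousLinearMap.map_smul]
    congr 1
    rw [hclm, ← matVec_clm, hv, matVec_matVec, hAinv]
  rw [ContinuousLinearMap.map_smul, hclmu]
  have hpow : (2 * Real.pi) ^ ((n : ℝ) / 2) = Real.sqrt (2 * Real.pi) ^ n := by
    have h2pi : (0:ℝ) ≤ 2 * Real.pi := by positivity
    rw [show ((n : ℝ) / 2) = (1/2 : ℝ) * n by ring, Real.rpow_mul h2pi,
      Real.rpow_natCast, ← Real.sqrt_eq_rpow]
  rw [hsqA, hpow]
  rw [smul_smul, smul_smul, smul_smul]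
  congr 1
  have hsq2pi : (0:ℝ) < Real.sqrt (2 * Real.pi) :=
    Real.sqrt_pos.mpr (by positivity)
  have hexp : Real.exp (-s^2/2) = Real.exp (- t ^ 2 / (2 * c0 ^ 2)) := by
    congr 1
    rw [hs_def, div_pow]
    field_simp
  have hpow' : Real.sqrt (2 * Real.pi) ^ n
      = Real.sqrt (2 * Real.pi) ^ (n - 1) * Real.sqrt (2 * Real.pi) := by
    rw [← pow_succ]
    congr 1
    omega
  rw [hexp, hpow']
  field_simp
end
end
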